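/- If the string equation holds, then for every x: ū′ + Σ_{l=1}^{n+1} ā_l·w̄_l′/w̄_l = 0 and u′ + Σ_{l=1}^{n+1} a_l·w_l′/w_l = 0. (That is, the quantities I₀ = ū + Σ ā_l log w̄_l = z̄(1/w = 0) and Ī₀ = u + Σ a_l log w_l = z(0) are integrals of the string equation.) -/

import Mathlib

open Finset Filter Topology

private lemma eval_limit_zero (f : ℂ → ℂ) (S : Set ℂ) (hS : S.Finite)
    (hf : Tendsto f (𝓝 0) (𝓝 (f 0)))
    (h0 : ∀ v : ℂ, v ≠ 0 → v ∉ S → f v = 0) : f 0 = 0 := by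
  have h1 : Tendsto f (𝓝[≠] (0:ℂ)) (𝓝 (f 0)) := hf.mono_left nhdsWithin_le_nhds
  have hT : IsClosed (S \ {0}) := (hS.subset Set.diff_subset).isClosed
  have hmem : (S \ {0})ᶜ ∈ 𝓝 (0:ℂ) := hT.isOpen_compl.mem_nhds (by simp)
  have h2 : Tendsto f (𝓝[≠] (0:ℂ)) (𝓝 0) := by
    refine Tendsto.congr' ?_ tendsto_const_nhds
    filter_upwards [self_mem_nhdsWithin, mem_nhdsWithin_of_mem_nhds hmem] with v hv1 hv2
    have hv0 : v ≠ 0 := hv1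
    by_cases hvS : v ∈ S
    · exact absurd ⟨hvS, hv0⟩ hv2
    · exact (h0 v hv0 hvS).symm
  exact tendsto_nhds_unique h1 h2

private lemma key2 (w r rp ub up S1 S2 S3 S4 : ℂ) (hw : w ≠ 0)
    (h : w * (r + S1) * (rp / w + ub + S4) - w * (rp * w + up + S2) * (- r / w ^ 2 + S3) = 1) :
    (r * w + w * S1) * (rp + ub * w + w * S4)
      - (rp * w + up + S2) * (- r + w ^ 2 * S3) - w = 0 := by
  have h2 : w ^ 2 * ((r * w + w * S1) * (rp + ub * w + w * S4)
      - (rp * w + up + S2) * (- r + w ^ 2 * S3) - w) = w ^ 2 * 0 := by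
    rw [mul_zero]
    field_simp at h
    linear_combination w ^ 2 * h
  exact mul_left_cancel₀ (pow_ne_zero 2 hw) h2

private lemma key1 (v r rp ub up T1 U2 T3 T4 : ℂ) (hv : v ≠ 0)
    (h : v⁻¹ * (r + T1) * (rp / v⁻¹ + ub + T4)
        - v⁻¹ * (rp * v⁻¹ + up + U2) * (- r / v⁻¹ ^ 2 + v * T3) = 1) :
    (r + T1) * (rp * v + ub + T4)
      - (rp + up * v + v * U2) * (- r * v + T3) - v = 0 := by
  have h2 : v ^ 2 * ((r + T1) * (rp * v + ub + T4)
      - (rp + up * v + v * U2) * (- r * v + T3) - v) = v ^ 2 * 0 := by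
    rw [mul_zero]
    field_simp at h
    linear_combination v ^ 2 * h
  exact mul_left_cancel₀ (pow_ne_zero 2 hv) h2

/-- under the string equation, the quantities
`I₀ = ū + Σ ā_l log w̄_l` and `Ī₀ = u + Σ a_l log w_l` are integrals of motion:
`ū′ + Σ ā_l w̄_l′/w̄_l = 0` and `u′ + Σ a_l w_l′/w_l = 0` for every `x`. -/
theorem I0_integral_of_string_equation
    (n : ℕ) (a abar : ℕ → ℂ)
    (r u ubar : ℝ → ℂ) (W Wb : ℕ → ℝ → ℂ)
    (r' u' ubar' : ℝ → ℂ) (W' Wb' : ℕ → ℝ → ℂ)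
    (ha : ∀ i ∈ Finset.Icc 1 (n + 1), a i ≠ 0)
    (habar : ∀ i ∈ Finset.Icc 1 (n + 1), abar i ≠ 0)
    (hasum : ∑ i ∈ Finset.Icc 1 (n + 1), a i = 0)
    (habarsum : ∑ i ∈ Finset.Icc 1 (n + 1), abar i = 0)
    (hr0 : ∀ x, r x ≠ 0)
    (hW0 : ∀ i ∈ Finset.Icc 1 (n + 1), ∀ x : ℝ, W i x ≠ 0)
    (hWb0 : ∀ i ∈ Finset.Icc 1 (n + 1), ∀ x : ℝ, Wb i x ≠ 0)
    (hWdist : ∀ i ∈ Finset.Icc 1 (n + 1), ∀ j ∈ Finset.Icc 1 (n + 1), i ≠ j →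
      ∀ x : ℝ, W i x ≠ W j x)
    (hWbdist : ∀ i ∈ Finset.Icc 1 (n + 1), ∀ j ∈ Finset.Icc 1 (n + 1), i ≠ j →
      ∀ x : ℝ, Wb i x ≠ Wb j x)
    (hWWb : ∀ i ∈ Finset.Icc 1 (n + 1), ∀ j ∈ Finset.Icc 1 (n + 1),
      ∀ x : ℝ, W i x * Wb j x ≠ 1)
    (hdr : ∀ x, HasDerivAt r (r' x) x)
    (hdu : ∀ x, HasDerivAt u (u' x) x)
    (hdubar : ∀ x, HasDerivAt ubar (ubar' x) x)
    (hdW : ∀ i ∈ Finset.Icc 1 (n + 1), ∀ x, HasDerivAt (W i) (W' i x) x)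
    (hdWb : ∀ i ∈ Finset.Icc 1 (n + 1), ∀ x, HasDerivAt (Wb i) (Wb' i x) x)
    -- the rational (in w) partial derivatives of z and z̄
    (Zw Zx Zbw Zbx : ℝ → ℂ → ℂ)
    (hZw : ∀ x w, Zw x w = r x + ∑ i ∈ Finset.Icc 1 (n + 1), a i / (w - W i x))
    (hZx : ∀ x w, Zx x w =
      r' x * w + u' x + ∑ i ∈ Finset.Icc 1 (n + 1), a i * W' i x / (W i x - w))
    (hZbw : ∀ x w, Zbw x w =
      - r x / w ^ 2 + ∑ i ∈ Finset.Icc 1 (n + 1), abar i / (w ^ 2 * (Wb i x - 1 / w)))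
    (hZbx : ∀ x w, Zbx x w =
      r' x / w + ubar' x + ∑ i ∈ Finset.Icc 1 (n + 1), abar i * Wb' i x / (Wb i x - 1 / w))
    -- the string equation
    (hstring : ∀ (x : ℝ) (w : ℂ), w ≠ 0 → (∀ j ∈ Finset.Icc 1 (n + 1), w ≠ W j x) →
      (∀ j ∈ Finset.Icc 1 (n + 1), w ≠ (Wb j x)⁻¹) →
      w * Zw x w * Zbx x w - w * Zx x w * Zbw x w = 1) :
    ∀ x : ℝ,
      ubar' x + ∑ l ∈ Finset.Icc 1 (n + 1), abar l * Wb' l x / Wb l x = 0 ∧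
      u' x + ∑ l ∈ Finset.Icc 1 (n + 1), a l * W' l x / W l x = 0 := by
  intro x
  set N := Finset.Icc 1 (n + 1) with hN
  constructor
  · -- first identity, via v = 1/w → 0
    set f : ℂ → ℂ := fun v =>
      (r x + ∑ i ∈ N, a i * v / (1 - v * W i x)) *
        (r' x * v + ubar' x + ∑ i ∈ N, abar i * Wb' i x / (Wb i x - v))
      - (r' x + u' x * v + v * ∑ i ∈ N, a i * W' i x * v / (v * W i x - 1)) *
        (- r x * v + ∑ i ∈ N, abar i * v / (Wb i x - v))
      - v with hf
    have hc : Tendsto f (𝓝 0) (𝓝 (f 0)) := by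
      rw [hf]
      apply ContinuousAt.sub
      apply ContinuousAt.sub
      · apply ContinuousAt.mul
        · apply ContinuousAt.add continuousAt_const
          refine tendsto_finset_sum _ fun i hi => ?_
          exact ContinuousAt.div (by fun_prop)
            (continuousAt_const.sub (continuousAt_id.mul continuousAt_const))
            (by simp)
        · apply ContinuousAt.add
          apply ContinuousAt.add (continuousAt_const.mul continuousAt_id) continuousAt_const
          refine tendsto_finset_sum _ fun i hi => ?_
          exact ContinuousAt.div continuousAt_const
            (continuousAt_const.sub continuousAt_id)
            (by simpa using hWb0 i hi x)
      · apply ContinuousAt.mul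
        · apply ContinuousAt.add
          apply ContinuousAt.add continuousAt_const (continuousAt_const.mul continuousAt_id)
          apply ContinuousAt.mul continuousAt_id
          refine tendsto_finset_sum _ fun i hi => ?_
          exact ContinuousAt.div (by fun_prop)
            ((continuousAt_id.mul continuousAt_const).sub continuousAt_const)
            (by simp)
        · apply ContinuousAt.add (continuousAt_const.mul continuousAt_id)
          refine tendsto_finset_sum _ fun i hi => ?_
          exact ContinuousAt.div (continuousAt_const.mul continuousAt_id)
            (continuousAt_const.sub continuousAt_id)
            (by simpa using hWb0 i hi x)
      · exact continuousAt_id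
    have h0 : ∀ v : ℂ, v ≠ 0 →
        v ∉ (((fun i => (W i x)⁻¹) '' ↑N) ∪ ((fun i => Wb i x) '' ↑N)) → f v = 0 := by
      intro v hv hvS
      have hWne : ∀ j ∈ N, (v⁻¹ : ℂ) ≠ W j x := by
        intro j hj h
        exact hvS (Set.mem_union_left _ ⟨j, hj, show (W j x)⁻¹ = v by rw [← h, inv_inv]⟩)
      have hvWb : ∀ j ∈ N, v ≠ Wb j x := by
        intro j hj h
        exact hvS (Set.mem_union_right _ ⟨j, hj, h.symm⟩)
      have hWbne : ∀ j ∈ N, (v⁻¹ : ℂ) ≠ (Wb j x)⁻¹ := fun j hj h =>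
        hvWb j hj (inv_injective h)
      have hs := hstring x v⁻¹ (inv_ne_zero hv) hWne hWbne
      rw [hZw, hZx, hZbw, hZbx] at hs
      rw [one_div, inv_inv] at hs
      have e1 : ∑ i ∈ N, a i / (v⁻¹ - W i x) = ∑ i ∈ N, a i * v / (1 - v * W i x) := by
        refine Finset.sum_congr rfl fun i hi => ?_
        have d1 : v⁻¹ - W i x ≠ 0 := sub_ne_zero.mpr (hWne i hi)
        have d2 : 1 - v * W i x ≠ 0 := by
          rw [sub_ne_zero]
          intro hcon
          exact hWne i hi (by rw [eq_inv_of_mul_eq_one_left hcon.symm, inv_inv])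
        field_simp
        try ring
      have e2 : ∑ i ∈ N, a i * W' i x / (W i x - v⁻¹)
          = ∑ i ∈ N, a i * W' i x * v / (v * W i x - 1) := by
        refine Finset.sum_congr rfl fun i hi => ?_
        have d1 : W i x - v⁻¹ ≠ 0 := sub_ne_zero.mpr (Ne.symm (hWne i hi))
        have d2 : v * W i x - 1 ≠ 0 := by
          rw [sub_ne_zero]
          intro hcon
          exact hWne i hi (by rw [eq_inv_of_mul_eq_one_left hcon, inv_inv])
        rw [div_eq_div_iff d1 d2]
        field_simp
      have e3 : ∑ i ∈ N, abar i / (v⁻¹ ^ 2 * (Wb i x - v))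
          = v * ∑ i ∈ N, abar i * v / (Wb i x - v) := by
        rw [Finset.mul_sum]
        refine Finset.sum_congr rfl fun i hi => ?_
        have d1 : Wb i x - v ≠ 0 := sub_ne_zero.mpr (Ne.symm (hvWb i hi))
        field_simp
        try ring
      rw [e1, e2, e3] at hs
      rw [hf]
      exact key1 v (r x) (r' x) (ubar' x) (u' x) _ _ _ _ hv hs
    have hfin : (((fun i => (W i x)⁻¹) '' ↑N) ∪ ((fun i => Wb i x) '' ↑N) : Set ℂ).Finite :=
      (N.finite_toSet.image _).union (N.finite_toSet.image _)
    have hkey := eval_limit_zero f _ hfin hc h0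
    have hval : f 0 = r x * (ubar' x + ∑ l ∈ N, abar l * Wb' l x / Wb l x) := by
      rw [hf]
      simp
    rw [hval] at hkey
    exact (mul_eq_zero.mp hkey).resolve_left (hr0 x)
  · -- second identity, via w → 0
    set g : ℂ → ℂ := fun w =>
      (r x * w + w * ∑ i ∈ N, a i / (w - W i x)) *
        (r' x + ubar' x * w + ∑ i ∈ N, abar i * Wb' i x * w ^ 2 / (w * Wb i x - 1))
      - (r' x * w + u' x + ∑ i ∈ N, a i * W' i x / (W i x - w)) *
        (- r x + ∑ i ∈ N, abar i * w / (w * Wb i x - 1))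
      - w with hg
    have hc : Tendsto g (𝓝 0) (𝓝 (g 0)) := by
      rw [hg]
      apply ContinuousAt.sub
      apply ContinuousAt.sub
      · apply ContinuousAt.mul
        · apply ContinuousAt.add (continuousAt_const.mul continuousAt_id)
          apply ContinuousAt.mul continuousAt_id
          refine tendsto_finset_sum _ fun i hi => ?_
          exact ContinuousAt.div continuousAt_const
            (continuousAt_id.sub continuousAt_const)
            (by simpa using (hW0 i hi x))
        · apply ContinuousAt.add
          apply ContinuousAt.add continuousAt_const (continuousAt_const.mul continuousAt_id)
          refine tendsto_finset_sum _ fun i hi => ?_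
          exact ContinuousAt.div (by fun_prop)
            ((continuousAt_id.mul continuousAt_const).sub continuousAt_const)
            (by simp)
      · apply ContinuousAt.mul
        · apply ContinuousAt.add
          apply ContinuousAt.add (continuousAt_const.mul continuousAt_id) continuousAt_const
          refine tendsto_finset_sum _ fun i hi => ?_
          exact ContinuousAt.div (by fun_prop)
            (continuousAt_const.sub continuousAt_id)
            (by simpa using hW0 i hi x)
        · apply ContinuousAt.add continuousAt_const
          refine tendsto_finset_sum _ fun i hi => ?_
          exact ContinuousAt.div (continuousAt_const.mul continuousAt_id)
            ((continuousAt_id.mul continuousAt_const).sub continuousAt_const)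
            (by simp)
      · exact continuousAt_id
    have h0 : ∀ w : ℂ, w ≠ 0 →
        w ∉ (((fun i => W i x) '' ↑N) ∪ ((fun i => (Wb i x)⁻¹) '' ↑N)) → g w = 0 := by
      intro w hw hwS
      have hWne : ∀ j ∈ N, w ≠ W j x := by
        intro j hj h
        exact hwS (Set.mem_union_left _ ⟨j, hj, h.symm⟩)
      have hWbne : ∀ j ∈ N, w ≠ (Wb j x)⁻¹ := by
        intro j hj h
        exact hwS (Set.mem_union_right _ ⟨j, hj, h.symm⟩)
      have hs := hstring x w hw hWne hWbne
      rw [hZw, hZx, hZbw, hZbx] at hs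
      have hden : ∀ j ∈ N, Wb j x - 1 / w ≠ 0 := by
        intro j hj
        rw [sub_ne_zero, one_div]
        intro hcon
        exact hWbne j hj (by rw [hcon, inv_inv])
      have hden2 : ∀ j ∈ N, w * Wb j x - 1 ≠ 0 := by
        intro j hj
        rw [sub_ne_zero]
        intro hcon
        exact hWbne j hj (eq_inv_of_mul_eq_one_left hcon)
      have e2 : ∑ i ∈ N, abar i * Wb' i x * w ^ 2 / (w * Wb i x - 1)
          = w * ∑ i ∈ N, abar i * Wb' i x / (Wb i x - 1 / w) := by
        rw [Finset.mul_sum]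
        refine Finset.sum_congr rfl fun i hi => ?_
        have d1 := hden i hi
        have d2 := hden2 i hi
        rw [show w * (abar i * Wb' i x / (Wb i x - 1 / w))
            = w * abar i * Wb' i x / (Wb i x - 1 / w) by ring,
          div_eq_div_iff d2 d1]
        field_simp
      have e4 : ∑ i ∈ N, abar i * w / (w * Wb i x - 1)
          = w ^ 2 * ∑ i ∈ N, abar i / (w ^ 2 * (Wb i x - 1 / w)) := by
        rw [Finset.mul_sum]
        refine Finset.sum_congr rfl fun i hi => ?_
        have d1 := hden i hi
        have d2 := hden2 i hi
        have d3 : w ^ 2 * (Wb i x - 1 / w) ≠ 0 := mul_ne_zero (pow_ne_zero 2 hw) d1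
        rw [show w ^ 2 * (abar i / (w ^ 2 * (Wb i x - 1 / w)))
            = w ^ 2 * abar i / (w ^ 2 * (Wb i x - 1 / w)) by ring,
          div_eq_div_iff d2 d3]
        field_simp
      rw [hg]
      show (r x * w + w * ∑ i ∈ N, a i / (w - W i x)) *
        (r' x + ubar' x * w + ∑ i ∈ N, abar i * Wb' i x * w ^ 2 / (w * Wb i x - 1))
      - (r' x * w + u' x + ∑ i ∈ N, a i * W' i x / (W i x - w)) *
        (- r x + ∑ i ∈ N, abar i * w / (w * Wb i x - 1))
      - w = 0
      rw [e2, e4]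
      exact key2 w (r x) (r' x) (ubar' x) (u' x) _ _ _ _ hw hs
    have hfin : (((fun i => W i x) '' ↑N) ∪ ((fun i => (Wb i x)⁻¹) '' ↑N) : Set ℂ).Finite :=
      (N.finite_toSet.image _).union (N.finite_toSet.image _)
    have hkey := eval_limit_zero g _ hfin hc h0
    have hval : g 0 = r x * (u' x + ∑ l ∈ N, a l * W' l x / W l x) := by
      rw [hg]
      simp
      ring
    rw [hval] at hkey
    exact (mul_eq_zero.mp hkey).resolve_left (hr0 x)
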